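/- There exist constants C₁, C₂ > 0 such that for every measurable set B ⊆ ℝ^d of finite Lebesgue measure, C₁·min{|B|^{1/p^-}, |B|^{1/q^+}} ≤ ‖χ_B‖_{L^H} ≤ C₂·max{|B|^{1/p^-}, |B|^{1/q^+}}, where χ_B is the indicator function of B and |B| denotes Lebesgue measure. -/

import Mathlib

open MeasureTheory Real Filter Topology
open scoped ENNReal

set_option maxHeartbeats 1000000

noncomputable section

noncomputable def gmodular {d : ℕ} (Φ : EuclideanSpace ℝ (Fin d) → ℝ → ℝ)
    (u : EuclideanSpace ℝ (Fin d) → ℝ) : ℝ≥0∞ :=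
  ∫⁻ x, ENNReal.ofReal (Φ x (|u x|))

noncomputable def luxNorm {d : ℕ} (Φ : EuclideanSpace ℝ (Fin d) → ℝ → ℝ)
    (u : EuclideanSpace ℝ (Fin d) → ℝ) : ℝ :=
  sInf {l : ℝ | 0 < l ∧ (∫⁻ x, ENNReal.ofReal (Φ x (|u x| / l))) ≤ 1}


/-- Continuity of the density `hh` on `[0,∞)`. -/
lemma hh_contOn (P Q : ℝ → ℝ) (m pm : ℝ) (hm : 0 ≤ m) (hpm : 2 ≤ pm)
    (hP : ContinuousOn P (Set.Ici 0)) (hQ : ContinuousOn Q (Set.Ici 0))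
    (hPbd : ∀ t, 0 ≤ t → pm ≤ P t) (hPQ : ∀ t, 0 ≤ t → P t < Q t)
    (hh : ℝ → ℝ) (hh0 : hh 0 = 0)
    (hhdef : ∀ t, 0 < t → hh t = t ^ (P t - 1) + m * t ^ (Q t - 1)) :
    ContinuousOn hh (Set.Ici 0) := by
  have hP1 : ∀ t, 0 ≤ t → (1:ℝ) ≤ P t - 1 := fun t ht => by
    have := hPbd t ht; linarith
  have hQ1 : ∀ t, 0 ≤ t → (1:ℝ) ≤ Q t - 1 := fun t ht => by
    have := hPbd t ht; have := hPQ t ht; linarith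
  intro s hs
  rcases eq_or_lt_of_le (Set.mem_Ici.mp hs : (0:ℝ) ≤ s) with rfl | hs'
  · -- continuity at 0 within Ici 0 via squeeze
    have hmem : Set.Icc (0:ℝ) 1 ∈ 𝓝[≥] (0:ℝ) :=
      Icc_mem_nhdsGE_of_mem ⟨le_refl 0, one_pos⟩
    have h0 : ∀ t ∈ Set.Icc (0:ℝ) 1, 0 ≤ hh t := by
      intro t ht
      rcases eq_or_lt_of_le ht.1 with rfl | htpos
      · simp [hh0]
      · rw [hhdef t htpos]
        have := Real.rpow_nonneg htpos.le (P t - 1)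
        have := Real.rpow_nonneg htpos.le (Q t - 1)
        nlinarith
    have h1 : ∀ t ∈ Set.Icc (0:ℝ) 1, hh t ≤ (1 + m) * t := by
      intro t ht
      rcases eq_or_lt_of_le ht.1 with rfl | htpos
      · simp [hh0]
      · rw [hhdef t htpos]
        have e1 : t ^ (P t - 1) ≤ t ^ (1:ℝ) :=
          Real.rpow_le_rpow_of_exponent_ge htpos ht.2 (hP1 t ht.1)
        have e2 : t ^ (Q t - 1) ≤ t ^ (1:ℝ) :=
          Real.rpow_le_rpow_of_exponent_ge htpos ht.2 (hQ1 t ht.1)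
        rw [Real.rpow_one] at e1 e2
        nlinarith
    have htend : Tendsto hh (𝓝[≥] (0:ℝ)) (𝓝 0) := by
      apply squeeze_zero' (eventually_of_mem hmem h0) (eventually_of_mem hmem h1)
      have : Tendsto (fun t : ℝ => (1 + m) * t) (𝓝 (0:ℝ)) (𝓝 ((1+m) * 0)) :=
        (continuous_const.mul continuous_id).tendsto 0
      simpa using this.mono_left nhdsWithin_le_nhds
    rw [ContinuousWithinAt, hh0]
    exact htend
  · -- continuity at s > 0
    have hPs : ContinuousAt P s :=
      (hP.mono (Set.Ioi_subset_Ici le_rfl)).continuousAt (Ioi_mem_nhds hs')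
    have hQs : ContinuousAt Q s :=
      (hQ.mono (Set.Ioi_subset_Ici le_rfl)).continuousAt (Ioi_mem_nhds hs')
    have hc : ContinuousAt (fun t => t ^ (P t - 1) + m * t ^ (Q t - 1)) s := by
      have c1 : ContinuousAt (fun t : ℝ => t ^ (P t - 1)) s :=
        (continuousAt_id.rpow (hPs.sub continuousAt_const) (Or.inl hs'.ne'))
      have c2 : ContinuousAt (fun t : ℝ => t ^ (Q t - 1)) s :=
        (continuousAt_id.rpow (hQs.sub continuousAt_const) (Or.inl hs'.ne'))
      exact c1.add (continuousAt_const.mul c2)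
    have heq : hh =ᶠ[𝓝 s] fun t => t ^ (P t - 1) + m * t ^ (Q t - 1) :=
      eventually_of_mem (Ioi_mem_nhds hs') (fun t ht => hhdef t ht)
    exact (hc.congr heq.symm).continuousWithinAt

/-- Two-sided bound on `H(u) = ∫₀ᵘ hh`. -/
lemma H_two_sided (P Q : ℝ → ℝ) (m pm qp M : ℝ) (hm : 0 ≤ m) (hmM : m ≤ M)
    (hpm : 2 ≤ pm) (hqp2 : 2 ≤ qp)
    (hP : ContinuousOn P (Set.Ici 0)) (hQ : ContinuousOn Q (Set.Ici 0))
    (hPbd : ∀ t, 0 ≤ t → pm ≤ P t)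
    (hQbd : ∀ t, 0 ≤ t → Q t ≤ qp)
    (hPQ : ∀ t, 0 ≤ t → P t < Q t)
    (hh : ℝ → ℝ) (hh0 : hh 0 = 0)
    (hhdef : ∀ t, 0 < t → hh t = t ^ (P t - 1) + m * t ^ (Q t - 1))
    (u : ℝ) (hu : 0 ≤ u) :
    (1/qp) * min (u ^ pm) (u ^ qp) ≤ (∫ s in (0:ℝ)..u, hh s) ∧
      (∫ s in (0:ℝ)..u, hh s) ≤ (1 + M) * (u ^ pm + u ^ qp) := by
  have hM : 0 ≤ M := hm.trans hmM
  have hpmqp : pm ≤ qp := by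
    have h1 := hPbd 0 le_rfl; have h2 := hQbd 0 le_rfl; have h3 := hPQ 0 le_rfl; linarith
  have hqp0 : (0:ℝ) < qp := by linarith
  have hpm0 : (0:ℝ) < pm := by linarith
  have hcont : ContinuousOn hh (Set.Ici 0) :=
    hh_contOn P Q m pm hm hpm hP hQ hPbd hPQ hh hh0 hhdef
  -- interval integrability of hh on [a,b] ⊆ [0,∞)
  have hint : ∀ a b : ℝ, 0 ≤ a → 0 ≤ b → IntervalIntegrable hh volume a b := by
    intro a b ha hb
    apply (hcont.mono ?_).intervalIntegrable
    intro t ht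
    exact le_trans (le_min ha hb) ht.1
  have hintr : ∀ (r a b : ℝ), 0 ≤ r →
      IntervalIntegrable (fun s : ℝ => s ^ r) volume a b :=
    fun r a b hr => intervalIntegral.intervalIntegrable_rpow (Or.inl hr)
  -- pointwise bounds
  have low1 : ∀ s ∈ Set.Icc (0:ℝ) 1, s ^ (qp - 1) ≤ hh s := by
    intro s hs
    rcases eq_or_lt_of_le hs.1 with rfl | hs0
    · rw [Real.zero_rpow (by linarith), hh0]
    · rw [hhdef s hs0]
      have e1 : s ^ (qp - 1) ≤ s ^ (P s - 1) := by
        apply Real.rpow_le_rpow_of_exponent_ge hs0 hs.2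
        have := hPQ s hs0.le; have := hQbd s hs0.le; linarith
      have e2 : 0 ≤ m * s ^ (Q s - 1) :=
        mul_nonneg hm (Real.rpow_nonneg hs0.le _)
      linarith
  have up1 : ∀ s ∈ Set.Icc (0:ℝ) 1, hh s ≤ (1 + M) * s ^ (pm - 1) := by
    intro s hs
    rcases eq_or_lt_of_le hs.1 with rfl | hs0
    · rw [Real.zero_rpow (by linarith), hh0]; simp
    · rw [hhdef s hs0]
      have e1 : s ^ (P s - 1) ≤ s ^ (pm - 1) := by
        apply Real.rpow_le_rpow_of_exponent_ge hs0 hs.2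
        have := hPbd s hs0.le; linarith
      have e2 : s ^ (Q s - 1) ≤ s ^ (pm - 1) := by
        apply Real.rpow_le_rpow_of_exponent_ge hs0 hs.2
        have := hPbd s hs0.le; have := hPQ s hs0.le; linarith
      have e3 : 0 ≤ s ^ (pm - 1) := Real.rpow_nonneg hs0.le _
      have e4 : m * s ^ (Q s - 1) ≤ M * s ^ (pm - 1) := by
        apply mul_le_mul hmM e2 (Real.rpow_nonneg hs0.le _) hM
      nlinarith
  have low2 : ∀ s ∈ Set.Icc (1:ℝ) u, s ^ (pm - 1) ≤ hh s := by
    intro s hs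
    have hs0 : (0:ℝ) < s := lt_of_lt_of_le one_pos hs.1
    rw [hhdef s hs0]
    have e1 : s ^ (pm - 1) ≤ s ^ (P s - 1) := by
      apply Real.rpow_le_rpow_of_exponent_le hs.1
      have := hPbd s hs0.le; linarith
    have e2 : 0 ≤ m * s ^ (Q s - 1) := mul_nonneg hm (Real.rpow_nonneg hs0.le _)
    linarith
  have up2 : ∀ s ∈ Set.Icc (1:ℝ) u, hh s ≤ (1 + M) * s ^ (qp - 1) := by
    intro s hs
    have hs0 : (0:ℝ) < s := lt_of_lt_of_le one_pos hs.1
    rw [hhdef s hs0]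
    have e1 : s ^ (P s - 1) ≤ s ^ (qp - 1) := by
      apply Real.rpow_le_rpow_of_exponent_le hs.1
      have := hPQ s hs0.le; have := hQbd s hs0.le; linarith
    have e2 : s ^ (Q s - 1) ≤ s ^ (qp - 1) := by
      apply Real.rpow_le_rpow_of_exponent_le hs.1
      have := hQbd s hs0.le; linarith
    have e4 : m * s ^ (Q s - 1) ≤ M * s ^ (qp - 1) :=
      mul_le_mul hmM e2 (Real.rpow_nonneg hs0.le _) hM
    nlinarith
  -- explicit integrals
  have intpow : ∀ (r a b : ℝ), 1 ≤ r → 0 ≤ a →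
      (∫ s in a..b, s ^ (r - 1)) = (b ^ r - a ^ r) / r := by
    intro r a b hr ha
    rw [integral_rpow (Or.inl (by linarith))]
    norm_num
  rcases le_total u 1 with hu1 | hu1
  · -- case u ≤ 1
    have hIcc : ∀ s ∈ Set.Icc (0:ℝ) u, s ∈ Set.Icc (0:ℝ) 1 :=
      fun s hs => ⟨hs.1, hs.2.trans hu1⟩
    constructor
    · have mono := intervalIntegral.integral_mono_on hu
        (hintr (qp - 1) 0 u (by linarith)) (hint 0 u le_rfl hu)
        (fun s hs => low1 s (hIcc s hs))
      rw [intpow qp 0 u (by linarith) le_rfl] at mono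
      rw [Real.zero_rpow hqp0.ne'] at mono
      have hmin : min (u ^ pm) (u ^ qp) = u ^ qp := by
        rcases eq_or_lt_of_le hu with rfl | hu0
        · rw [Real.zero_rpow hqp0.ne', Real.zero_rpow hpm0.ne']; simp
        · exact min_eq_right (Real.rpow_le_rpow_of_exponent_ge hu0 hu1 hpmqp)
      rw [hmin]
      calc (1/qp) * u ^ qp = (u ^ qp - 0) / qp := by ring
        _ ≤ _ := mono
    · have mono := intervalIntegral.integral_mono_on hu
        (hint 0 u le_rfl hu) ((hintr (pm - 1) 0 u (by linarith)).const_mul (1 + M))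
        (fun s hs => up1 s (hIcc s hs))
      rw [intervalIntegral.integral_const_mul, intpow pm 0 u (by linarith) le_rfl,
        Real.zero_rpow hpm0.ne'] at mono
      have h1 : (1 + M) * ((u ^ pm - 0) / pm) ≤ (1 + M) * (u ^ pm + u ^ qp) := by
        have e3 : 0 ≤ u ^ pm := Real.rpow_nonneg hu _
        have e5 : 0 ≤ u ^ qp := Real.rpow_nonneg hu _
        have e4 : u ^ pm / pm ≤ u ^ pm := by
          apply div_le_self e3; linarith
        have : (0:ℝ) < 1 + M := by linarith
        rw [sub_zero]
        nlinarith
      linarith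
  · -- case 1 ≤ u
    have hsplit : (∫ s in (0:ℝ)..u, hh s) =
        (∫ s in (0:ℝ)..1, hh s) + ∫ s in (1:ℝ)..u, hh s :=
      (intervalIntegral.integral_add_adjacent_intervals
        (hint 0 1 le_rfl zero_le_one) (hint 1 u zero_le_one hu)).symm
    have hu_pm1 : (1:ℝ) ≤ u ^ pm := Real.one_le_rpow hu1 hpm0.le
    have hu_qp1 : (1:ℝ) ≤ u ^ qp := Real.one_le_rpow hu1 hqp0.le
    -- bounds on ∫₀¹
    have hH1_low : (1:ℝ)/qp ≤ ∫ s in (0:ℝ)..1, hh s := by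
      have mono := intervalIntegral.integral_mono_on zero_le_one
        (hintr (qp - 1) 0 1 (by linarith)) (hint 0 1 le_rfl zero_le_one) low1
      rw [intpow qp 0 1 (by linarith) le_rfl, Real.zero_rpow hqp0.ne',
        Real.one_rpow] at mono
      linarith [mono]
    have hH1_up : (∫ s in (0:ℝ)..1, hh s) ≤ (1 + M) / pm := by
      have mono := intervalIntegral.integral_mono_on zero_le_one
        (hint 0 1 le_rfl zero_le_one) ((hintr (pm - 1) 0 1 (by linarith)).const_mul (1 + M)) up1
      rw [intervalIntegral.integral_const_mul, intpow pm 0 1 (by linarith) le_rfl,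
        Real.zero_rpow hpm0.ne', Real.one_rpow] at mono
      calc (∫ s in (0:ℝ)..1, hh s) ≤ (1 + M) * ((1 - 0) / pm) := mono
        _ = (1 + M) / pm := by ring
    -- bounds on ∫₁ᵘ
    have h2_low : (u ^ pm - 1) / pm ≤ ∫ s in (1:ℝ)..u, hh s := by
      have mono := intervalIntegral.integral_mono_on hu1
        (hintr (pm - 1) 1 u (by linarith)) (hint 1 u zero_le_one hu) low2
      rwa [intpow pm 1 u (by linarith) zero_le_one, Real.one_rpow] at mono
    have h2_up : (∫ s in (1:ℝ)..u, hh s) ≤ (1 + M) * ((u ^ qp - 1) / qp) := by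
      have mono := intervalIntegral.integral_mono_on hu1
        (hint 1 u zero_le_one hu) ((hintr (qp - 1) 1 u (by linarith)).const_mul (1 + M)) up2
      rwa [intervalIntegral.integral_const_mul, intpow qp 1 u (by linarith) zero_le_one,
        Real.one_rpow] at mono
    constructor
    · have hmin : min (u ^ pm) (u ^ qp) = u ^ pm :=
        min_eq_left (Real.rpow_le_rpow_of_exponent_le hu1 hpmqp)
      rw [hsplit, hmin]
      have key : (u ^ pm - 1) / qp ≤ (u ^ pm - 1) / pm :=
        div_le_div_of_nonneg_left (by linarith) hpm0 hpmqp
      calc (1/qp) * u ^ pm = 1/qp + (u ^ pm - 1)/qp := by field_simp; ring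
        _ ≤ _ := by linarith
    · rw [hsplit]
      have e1 : (1 + M) / pm ≤ (1 + M) * u ^ pm := by
        have : (1 + M) / pm ≤ (1 + M) := by
          apply div_le_self (by linarith); linarith
        nlinarith
      have e2 : (1 + M) * ((u ^ qp - 1) / qp) ≤ (1 + M) * u ^ qp := by
        have : (u ^ qp - 1) / qp ≤ u ^ qp := by
          apply le_trans (div_le_self (by linarith) (by linarith)); linarith
        nlinarith
      nlinarith

theorem statement5
    {d : ℕ} (hd : 3 ≤ d)
    (p q : EuclideanSpace ℝ (Fin d) → ℝ → ℝ)
    (μ : EuclideanSpace ℝ (Fin d) → ℝ)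
    (h H : EuclideanSpace ℝ (Fin d) → ℝ → ℝ)
    (pm pp qm qp : ℝ)
    (hp_meas : ∀ t : ℝ, 0 ≤ t → Measurable fun x => p x t)
    (hq_meas : ∀ t : ℝ, 0 ≤ t → Measurable fun x => q x t)
    (hp_cont : ∀ x, ContinuousOn (p x) (Set.Ici 0))
    (hq_cont : ∀ x, ContinuousOn (q x) (Set.Ici 0))
    (hpm2 : 2 ≤ pm) (hpmp : pm ≤ pp) (hppd : pp < (d : ℝ))
    (hqm2 : 2 ≤ qm) (hqmp : qm ≤ qp)
    (hpbd : ∀ᵐ x ∂(volume : Measure (EuclideanSpace ℝ (Fin d))), ∀ t, 0 ≤ t → pm ≤ p x t ∧ p x t ≤ pp)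
    (hqbd : ∀ᵐ x ∂(volume : Measure (EuclideanSpace ℝ (Fin d))), ∀ t, 0 ≤ t → qm ≤ q x t ∧ q x t ≤ qp)
    (hpq : ∀ᵐ x ∂(volume : Measure (EuclideanSpace ℝ (Fin d))), ∀ t, 0 ≤ t →
      p x t < q x t ∧ q x t < (d : ℝ) * pm / ((d : ℝ) - pm))
    (hp1 : ∀ x, ∀ t ∈ Set.Icc (0:ℝ) 1, p x t = p x 1)
    (hq1 : ∀ x, ∀ t ∈ Set.Icc (0:ℝ) 1, q x t = q x 1)
    (hpmono : ∀ x, MonotoneOn (p x) (Set.Ici 1))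
    (hqmono : ∀ x, MonotoneOn (q x) (Set.Ici 1))
    (hμ0 : ∀ x, 0 ≤ μ x) (hμbd : ∃ M : ℝ, ∀ x, μ x ≤ M)
    (hμlip : ∃ K : NNReal, LipschitzWith K μ)
    (hh0 : ∀ x, h x 0 = 0)
    (hhdef : ∀ x t, 0 < t → h x t = t ^ (p x t - 1) + μ x * t ^ (q x t - 1))
    (hHdef : ∀ x t, H x t = ∫ s in (0:ℝ)..|t|, h x s)
    :
    ∃ C₁ > (0:ℝ), ∃ C₂ > (0:ℝ),
      ∀ B : Set (EuclideanSpace ℝ (Fin d)), MeasurableSet B → volume B < ⊤ →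
        C₁ * min ((volume B).toReal ^ (1 / pm)) ((volume B).toReal ^ (1 / qp)) ≤
            luxNorm H (B.indicator fun _ => (1:ℝ)) ∧
          luxNorm H (B.indicator fun _ => (1:ℝ)) ≤
            C₂ * max ((volume B).toReal ^ (1 / pm)) ((volume B).toReal ^ (1 / qp)) := by
  obtain ⟨M0, hM0⟩ := hμbd
  set M : ℝ := max M0 0 with hMdef
  have hμM : ∀ x, μ x ≤ M := fun x => (hM0 x).trans (le_max_left _ _)
  have hMnn : (0:ℝ) ≤ M := le_max_right _ _
  have hqp0 : (0:ℝ) < qp := by linarith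
  have hpm0 : (0:ℝ) < pm := by linarith
  have hqpinv : (0:ℝ) < 1/qp := by positivity
  have hC1 : (1:ℝ) ≤ 1 + M := by linarith
  have hC₂1 : (1:ℝ) ≤ 2 * (1 + M) := by linarith
  have hC₂0 : (0:ℝ) < 2 * (1 + M) := by linarith
  have hc₁pos : (0:ℝ) < min ((1/qp) ^ (1/pm)) ((1/qp) ^ (1/qp)) :=
    lt_min (Real.rpow_pos_of_pos hqpinv _) (Real.rpow_pos_of_pos hqpinv _)
  -- bundle a.e. hypotheses
  have hae : ∀ᵐ x ∂(volume : Measure (EuclideanSpace ℝ (Fin d))), ∀ t : ℝ, 0 ≤ t →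
      (pm ≤ p x t ∧ p x t ≤ pp) ∧ (qm ≤ q x t ∧ q x t ≤ qp) ∧ p x t < q x t := by
    filter_upwards [hpbd, hqbd, hpq] with x h1 h2 h3 t ht
    exact ⟨h1 t ht, h2 t ht, (h3 t ht).1⟩
  have haeH : ∀ᵐ x ∂(volume : Measure (EuclideanSpace ℝ (Fin d))), ∀ u : ℝ, 0 ≤ u →
      (1/qp) * min (u ^ pm) (u ^ qp) ≤ H x u ∧ H x u ≤ (1 + M) * (u ^ pm + u ^ qp) := by
    filter_upwards [hae] with x hx u hu
    have key := H_two_sided (p x) (q x) (μ x) pm qp M (hμ0 x) (hμM x) hpm2 (by linarith)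
      (hp_cont x) (hq_cont x) (fun t ht => (hx t ht).1.1) (fun t ht => (hx t ht).2.1.2)
      (fun t ht => (hx t ht).2.2) (h x) (hh0 x) (fun t ht => hhdef x t ht) u hu
    rw [hHdef x u, abs_of_nonneg hu]
    exact key
  -- pm ≤ qp
  have hvol_ne : (volume : Measure (EuclideanSpace ℝ (Fin d))) ≠ 0 :=
    Measure.measure_univ_pos.mp (isOpen_univ.measure_pos _ ⟨0, trivial⟩)
  have hNB : (ae (volume : Measure (EuclideanSpace ℝ (Fin d)))).NeBot :=
    ae_neBot.mpr hvol_ne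
  obtain ⟨x₀, hx₀⟩ := hae.exists
  have hpmqp : pm ≤ qp := by
    have h1 := (hx₀ 0 le_rfl).1.1
    have h2 := (hx₀ 0 le_rfl).2.1.2
    have h3 := (hx₀ 0 le_rfl).2.2
    linarith
  refine ⟨min ((1/qp) ^ (1/pm)) ((1/qp) ^ (1/qp)), hc₁pos, 2 * (1 + M), hC₂0, ?_⟩
  intro B hB hBfin
  set V : ℝ := (volume B).toReal with hVdef
  have hVnn : 0 ≤ V := ENNReal.toReal_nonneg
  set S : Set ℝ := {l : ℝ | 0 < l ∧
    (∫⁻ x, ENNReal.ofReal (H x (|(B.indicator fun _ => (1:ℝ)) x| / l))) ≤ 1} with hSdef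
  have hlux : luxNorm H (B.indicator fun _ => (1:ℝ)) = sInf S := rfl
  have hbdd : BddBelow S := ⟨0, fun l hl => hl.1.le⟩
  have hH0 : ∀ x, H x 0 = 0 := fun x => by rw [hHdef x 0]; simp
  -- modular upper bound
  have hmod_up : ∀ l : ℝ, 0 < l →
      (∫⁻ x, ENNReal.ofReal (H x (|(B.indicator fun _ => (1:ℝ)) x| / l)))
        ≤ ENNReal.ofReal ((1 + M) * ((1/l) ^ pm + (1/l) ^ qp)) * volume B := by
    intro l hl
    have hpt : ∀ᵐ x ∂(volume : Measure (EuclideanSpace ℝ (Fin d))),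
        ENNReal.ofReal (H x (|(B.indicator fun _ => (1:ℝ)) x| / l)) ≤
        B.indicator (fun _ => ENNReal.ofReal ((1 + M) * ((1/l) ^ pm + (1/l) ^ qp))) x := by
      filter_upwards [haeH] with x hx
      by_cases hxB : x ∈ B
      · simp only [Set.indicator_of_mem hxB, abs_one]
        exact ENNReal.ofReal_le_ofReal (hx (1/l) (by positivity)).2
      · simp only [Set.indicator_of_notMem hxB, abs_zero, zero_div, hH0 x]
        simp
    calc (∫⁻ x, ENNReal.ofReal (H x (|(B.indicator fun _ => (1:ℝ)) x| / l)))
        ≤ ∫⁻ x, B.indicator (fun _ => ENNReal.ofReal ((1 + M) * ((1/l) ^ pm + (1/l) ^ qp))) x :=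
          lintegral_mono_ae hpt
      _ = ENNReal.ofReal ((1 + M) * ((1/l) ^ pm + (1/l) ^ qp)) * volume B := by
          rw [lintegral_indicator hB, setLIntegral_const]
  -- modular lower bound
  have hmod_low : ∀ l : ℝ, 0 < l →
      ENNReal.ofReal ((1/qp) * min ((1/l) ^ pm) ((1/l) ^ qp)) * volume B ≤
      (∫⁻ x, ENNReal.ofReal (H x (|(B.indicator fun _ => (1:ℝ)) x| / l))) := by
    intro l hl
    have hpt : ∀ᵐ x ∂(volume : Measure (EuclideanSpace ℝ (Fin d))),
        B.indicator (fun _ => ENNReal.ofReal ((1/qp) * min ((1/l) ^ pm) ((1/l) ^ qp))) x ≤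
        ENNReal.ofReal (H x (|(B.indicator fun _ => (1:ℝ)) x| / l)) := by
      filter_upwards [haeH] with x hx
      by_cases hxB : x ∈ B
      · simp only [Set.indicator_of_mem hxB, abs_one]
        exact ENNReal.ofReal_le_ofReal (hx (1/l) (by positivity)).1
      · simp only [Set.indicator_of_notMem hxB]
        exact zero_le
    calc ENNReal.ofReal ((1/qp) * min ((1/l) ^ pm) ((1/l) ^ qp)) * volume B
        = ∫⁻ x, B.indicator (fun _ => ENNReal.ofReal ((1/qp) * min ((1/l) ^ pm) ((1/l) ^ qp))) x := by
          rw [lintegral_indicator hB, setLIntegral_const]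
      _ ≤ _ := lintegral_mono_ae hpt
  by_cases hV0 : volume B = 0
  · -- trivial case
    have hVz : V = 0 := by rw [hVdef, hV0]; simp
    have hz : V ^ (1/pm) = 0 := by rw [hVz]; exact Real.zero_rpow (by positivity)
    have hz' : V ^ (1/qp) = 0 := by rw [hVz]; exact Real.zero_rpow (by positivity)
    rw [hlux, hz, hz']
    constructor
    · simp only [min_self, mul_zero]
      exact Real.sInf_nonneg (fun l hl => hl.1.le)
    · simp only [max_self, mul_zero]
      have hmem : ∀ l : ℝ, 0 < l → l ∈ S := by
        intro l hl
        refine ⟨hl, ?_⟩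
        have h2 := hmod_up l hl
        rw [hV0, mul_zero] at h2
        exact le_trans h2 zero_le_one
      apply le_of_forall_pos_le_add
      intro ε hε
      have : sInf S ≤ ε := csInf_le hbdd (hmem ε hε)
      linarith
  · -- positive measure case
    have hVpos : 0 < V := ENNReal.toReal_pos hV0 hBfin.ne
    have hvolV : volume B = ENNReal.ofReal V := (ENNReal.ofReal_toReal hBfin.ne).symm
    set m₀ : ℝ := max (V ^ (1/pm)) (V ^ (1/qp)) with hm₀def
    have hm₀pos : 0 < m₀ := lt_max_of_lt_left (Real.rpow_pos_of_pos hVpos _)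
    set l₀ : ℝ := 2 * (1 + M) * m₀ with hl₀def
    have hl₀pos : 0 < l₀ := by positivity
    -- the key power estimate
    have step : ∀ r : ℝ, 1 ≤ r → V ^ (1/r) ≤ m₀ → (1/l₀) ^ r ≤ (2 * (1 + M) * V)⁻¹ := by
      intro r hr hVr
      have hr0 : (0:ℝ) < r := by linarith
      have h1 : V ≤ m₀ ^ r := by
        have h2 := Real.rpow_le_rpow (Real.rpow_nonneg hVnn _) hVr hr0.le
        rwa [one_div, Real.rpow_inv_rpow hVnn hr0.ne'] at h2
      have h2 : 2 * (1 + M) ≤ (2 * (1 + M)) ^ r := by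
        calc 2 * (1 + M) = (2 * (1 + M)) ^ (1:ℝ) := (Real.rpow_one _).symm
          _ ≤ (2 * (1 + M)) ^ r := Real.rpow_le_rpow_of_exponent_le hC₂1 hr
      have h3 : 2 * (1 + M) * V ≤ l₀ ^ r := by
        rw [hl₀def, Real.mul_rpow hC₂0.le hm₀pos.le]
        exact mul_le_mul h2 h1 hVnn (by positivity)
      rw [one_div, Real.inv_rpow hl₀pos.le]
      exact inv_anti₀ (by positivity) h3
    have hl₀S : l₀ ∈ S := by
      refine ⟨hl₀pos, ?_⟩
      refine le_trans (hmod_up l₀ hl₀pos) ?_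
      rw [hvolV, ← ENNReal.ofReal_mul (by positivity)]
      apply ENNReal.ofReal_le_one.mpr
      have s1 := step pm (by linarith) (le_max_left _ _)
      have s2 := step qp (by linarith) (le_max_right _ _)
      have h1M : (1 + M) ≠ 0 := by linarith
      have e1 : (1 + M) * ((1/l₀) ^ pm + (1/l₀) ^ qp) * V ≤
          (1 + M) * (2 * (2 * (1 + M) * V)⁻¹) * V := by
        have hp1 : (0:ℝ) ≤ (1 + M) := by linarith
        have hsum : (1/l₀) ^ pm + (1/l₀) ^ qp ≤ 2 * (2 * (1 + M) * V)⁻¹ := by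
          have := add_le_add s1 s2; linarith
        exact mul_le_mul_of_nonneg_right (mul_le_mul_of_nonneg_left hsum hp1) hVnn
      have e2 : (1 + M) * (2 * (2 * (1 + M) * V)⁻¹) * V = 1 := by
        field_simp
      linarith
    constructor
    · -- lower bound
      rw [hlux]
      apply le_csInf ⟨l₀, hl₀S⟩
      intro l hl
      obtain ⟨hlpos, hlmod⟩ := hl
      have hb : (1/qp) * min ((1/l) ^ pm) ((1/l) ^ qp) * V ≤ 1 := by
        have h1 : ENNReal.ofReal ((1/qp) * min ((1/l) ^ pm) ((1/l) ^ qp)) * volume B ≤ 1 :=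
          le_trans (hmod_low l hlpos) hlmod
        have hbnn : 0 ≤ (1/qp) * min ((1/l) ^ pm) ((1/l) ^ qp) := by positivity
        rw [hvolV, ← ENNReal.ofReal_mul hbnn] at h1
        exact (ENNReal.ofReal_le_one.mp h1)
      have hkey : ∀ r : ℝ, 0 < r → (1/qp) * (1/l) ^ r * V ≤ 1 →
          (1/qp) ^ (1/r) * V ^ (1/r) ≤ l := by
        intro r hr hler
        have hlr : (0:ℝ) < l ^ r := Real.rpow_pos_of_pos hlpos _
        have hinv : (1/l) ^ r = (l ^ r)⁻¹ := by
          rw [one_div, Real.inv_rpow hlpos.le]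
        rw [hinv] at hler
        have h4 : V / qp ≤ l ^ r := by
          have hmul := mul_le_mul_of_nonneg_right hler
            (by positivity : (0:ℝ) ≤ qp * l ^ r)
          have hid : 1/qp * (l ^ r)⁻¹ * V * (qp * l ^ r) = V := by
            field_simp [hqp0.ne', hlr.ne']
          rw [hid, one_mul] at hmul
          rw [div_le_iff₀ hqp0]
          nlinarith [hmul]
        have h5 : (V/qp) ^ (1/r) ≤ l := by
          rw [one_div]
          have h6 := Real.rpow_le_rpow (by positivity) h4 (by positivity : (0:ℝ) ≤ r⁻¹)
          rwa [Real.rpow_rpow_inv hlpos.le hr.ne'] at h6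
        have heq : (1/qp) ^ (1/r) * V ^ (1/r) = (V/qp) ^ (1/r) := by
          rw [Real.div_rpow hVnn hqp0.le, Real.div_rpow zero_le_one hqp0.le, Real.one_rpow]
          ring
        rw [heq]
        exact h5
      rcases le_total l 1 with hl1 | hl1
      · -- 1/l ≥ 1 : min is the pm-power
        have hinv1 : (1:ℝ) ≤ 1/l := (le_div_iff₀ hlpos).mpr (by linarith)
        have hmin : min ((1/l) ^ pm) ((1/l) ^ qp) = (1/l) ^ pm :=
          min_eq_left (Real.rpow_le_rpow_of_exponent_le hinv1 hpmqp)
        rw [hmin] at hb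
        have := hkey pm hpm0 hb
        calc min ((1/qp) ^ (1/pm)) ((1/qp) ^ (1/qp)) * min (V ^ (1/pm)) (V ^ (1/qp))
            ≤ (1/qp) ^ (1/pm) * V ^ (1/pm) := by
              apply mul_le_mul (min_le_left _ _) (min_le_left _ _) ?_ (by positivity)
              exact le_min (Real.rpow_nonneg hVnn _) (Real.rpow_nonneg hVnn _)
          _ ≤ l := this
      · have hinv1 : 1/l ≤ 1 := by
          rw [div_le_one hlpos]; exact hl1
        have hmin : min ((1/l) ^ pm) ((1/l) ^ qp) = (1/l) ^ qp :=
          min_eq_right (Real.rpow_le_rpow_of_exponent_ge (by positivity) hinv1 hpmqp)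
        rw [hmin] at hb
        have := hkey qp hqp0 hb
        calc min ((1/qp) ^ (1/pm)) ((1/qp) ^ (1/qp)) * min (V ^ (1/pm)) (V ^ (1/qp))
            ≤ (1/qp) ^ (1/qp) * V ^ (1/qp) := by
              apply mul_le_mul (min_le_right _ _) (min_le_right _ _) ?_ (by positivity)
              exact le_min (Real.rpow_nonneg hVnn _) (Real.rpow_nonneg hVnn _)
          _ ≤ l := this
    · -- upper bound
      rw [hlux]
      calc sInf S ≤ l₀ := csInf_le hbdd hl₀S
        _ = 2 * (1 + M) * max (V ^ (1/pm)) (V ^ (1/qp)) := by rw [hl₀def, hm₀def]
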